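/- Let φ be a structural set in ℝ_{0,m} with m even. Then for every k-grade multivector [a]_k, Ψⱼ^{φ,φ}([a]_k) = Ψ_{m-j}^{φ,φ}([a]_k) if k is even, and Ψⱼ^{φ,φ}([a]_k) = -Ψ_{m-j}^{φ,φ}([a]_k) if k is odd. -/

import Mathlib

open CliffordAlgebra

noncomputable section

/-- The quadratic form of `ℝ_{0,m}`: negative definite on `ℝ^m`. -/
abbrev Qf (m : ℕ) : QuadraticForm ℝ (Fin m → ℝ) :=
  QuadraticMap.weightedSumSquares ℝ (fun _ : Fin m => (-1 : ℝ))

/-- The real Clifford algebra `ℝ_{0,m}`. -/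
abbrev Cl (m : ℕ) := CliffordAlgebra (Qf m)

/-- A structural set: an orthonormal basis `ψ¹,…,ψᵐ` of `ℝᵐ`. -/
def IsStructuralSet {m : ℕ} (ψ : Fin m → (Fin m → ℝ)) : Prop :=
  ∀ i j, (∑ t, ψ i t * ψ j t) = if i = j then (1 : ℝ) else 0

/-- The ordered product `ψ_A = ψ^{j₁} ⋯ ψ^{j_k}` for `A = {j₁ < ⋯ < j_k}`. -/
def prodS {m : ℕ} (ψ : Fin m → (Fin m → ℝ)) (A : Finset (Fin m)) : Cl m :=
  ((A.sort (· ≤ ·)).map (fun i => ι (Qf m) (ψ i))).prod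

/-- The operator `Ψ_k^{φ,ψ}(a) = Σ_{|A|=k} φ_A a ψ̂_A`. -/
def PsiK {m : ℕ} (φ ψ : Fin m → (Fin m → ℝ)) (k : ℕ) (a : Cl m) : Cl m :=
  ∑ A ∈ Finset.univ.filter (fun A : Finset (Fin m) => A.card = k),
    prodS φ A * a * reverse (prodS ψ A)

/-- `Ψ₊ = Σ_{k even} Ψ_k`. -/
def PsiPlus {m : ℕ} (φ ψ : Fin m → (Fin m → ℝ)) (a : Cl m) : Cl m :=
  ∑ k ∈ (Finset.range (m + 1)).filter (fun k => Even k), PsiK φ ψ k a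

/-- `Ψ₋ = Σ_{k odd} Ψ_k`. -/
def PsiMinus {m : ℕ} (φ ψ : Fin m → (Fin m → ℝ)) (a : Cl m) : Cl m :=
  ∑ k ∈ (Finset.range (m + 1)).filter (fun k => Odd k), PsiK φ ψ k a

/-- `Ψ₁^{φ,ψ}(a) = Σⱼ φʲ a ψʲ`. -/
def Psi1 {m : ℕ} (φ ψ : Fin m → (Fin m → ℝ)) (a : Cl m) : Cl m :=
  ∑ j, ι (Qf m) (φ j) * a * ι (Qf m) (ψ j)

/-- The standard basis of `ℝᵐ`. -/
def stdB {m : ℕ} (i : Fin m) : Fin m → ℝ := Pi.single i 1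

/-- The basis multivector `e_A`. -/
def eA {m : ℕ} (A : Finset (Fin m)) : Cl m := prodS stdB A

/-- The element with coefficients `c` in the multivector basis. -/
def toCl {m : ℕ} (c : Finset (Fin m) → ℝ) : Cl m := ∑ A, c A • eA A

/-- The space `ℝ_{0,m}^{(k)}` of `k`-grade multivectors. -/
def gradeK (m k : ℕ) : Submodule ℝ (Cl m) :=
  Submodule.span ℝ {x | ∃ A : Finset (Fin m), A.card = k ∧ x = eA A}

/-- Coefficient functions of `ℝ_{0,m}`-valued maps. -/
abbrev Coef (m : ℕ) := Finset (Fin m) → ℝ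

/-- The coefficients of the even part `f₊`. -/
def cEven {m : ℕ} (c : Coef m) : Coef m := fun A => if Even A.card then c A else 0

/-- The coefficients of the odd part `f₋`. -/
def cOdd {m : ℕ} (c : Coef m) : Coef m := fun A => if Odd A.card then c A else 0

/-- The even part of a Clifford number. -/
def evenPart {m : ℕ} (a : Cl m) : Cl m :=
  (DirectSum.decompose (evenOdd (Qf m)) a 0 : evenOdd (Qf m) 0)

/-- The odd part of a Clifford number. -/
def oddPart {m : ℕ} (a : Cl m) : Cl m :=
  (DirectSum.decompose (evenOdd (Qf m)) a 1 : evenOdd (Qf m) 1)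

/-- Partial derivative `∂F/∂xᵢ` of a coefficient function. -/
def pd {m : ℕ} (i : Fin m) (F : (Fin m → ℝ) → Coef m) : (Fin m → ℝ) → Coef m :=
  fun x => fderiv ℝ F x (Pi.single i 1)

/-- The sandwich operator `φ∂[f]ψ∂ = Σᵢⱼ φⁱ (∂²f/∂xᵢ∂xⱼ) ψʲ` for `f = Σ_A F_A e_A`. -/
def sandwichD {m : ℕ} (φ ψ : Fin m → (Fin m → ℝ)) (F : (Fin m → ℝ) → Coef m)
    (x : Fin m → ℝ) : Cl m :=
  ∑ i, ∑ j, ι (Qf m) (φ i) * toCl (pd i (pd j F) x) * ι (Qf m) (ψ j)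

/-- The operator `φ∂[ψ∂[f]] = Σᵢⱼ φⁱ ψʲ ∂²f/∂xᵢ∂xⱼ`. -/
def ddD {m : ℕ} (φ ψ : Fin m → (Fin m → ℝ)) (F : (Fin m → ℝ) → Coef m)
    (x : Fin m → ℝ) : Cl m :=
  ∑ i, ∑ j, ι (Qf m) (φ i) * (ι (Qf m) (ψ j) * toCl (pd i (pd j F) x))

/-- The componentwise Laplacian `Δf = Σᵢ ∂²f/∂xᵢ²`. -/
def lapD {m : ℕ} (F : (Fin m → ℝ) → Coef m) (x : Fin m → ℝ) : Cl m :=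
  ∑ i, toCl (pd i (pd i F) x)


/-! ### Auxiliary machinery for Statement 6 -/

namespace Psi6Aux

open CliffordAlgebra Finset

variable {m : ℕ} (φ : Fin m → (Fin m → ℝ))

/-- Product of generators along a list of indices. -/
def Pl (l : List (Fin m)) : Cl m := (l.map (fun i => ι (Qf m) (φ i))).prod

@[simp] lemma Pl_nil : Pl φ [] = 1 := rfl

@[simp] lemma Pl_cons (i : Fin m) (l : List (Fin m)) :
    Pl φ (i :: l) = ι (Qf m) (φ i) * Pl φ l := by simp [Pl]

lemma Pl_append (l₁ l₂ : List (Fin m)) : Pl φ (l₁ ++ l₂) = Pl φ l₁ * Pl φ l₂ := by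
  simp [Pl]

lemma prodS_eq (A : Finset (Fin m)) : prodS φ A = Pl φ (A.sort (· ≤ ·)) := rfl

lemma reverse_Pl (l : List (Fin m)) : reverse (Q := Qf m) (Pl φ l) = Pl φ l.reverse := by
  have h := CliffordAlgebra.reverse_prod_map_ι (Q := Qf m) (l.map φ)
  simp only [List.map_map, Function.comp_def] at h
  rw [Pl, Pl, List.map_reverse]
  exact h

lemma polar_Qf (u v : Fin m → ℝ) :
    QuadraticMap.polar (⇑(Qf m)) u v = ∑ t, (-2 : ℝ) * (u t * v t) := by
  simp only [QuadraticMap.polar, QuadraticMap.weightedSumSquares_apply, Pi.add_apply,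
    smul_eq_mul]
  rw [← Finset.sum_sub_distrib, ← Finset.sum_sub_distrib]
  exact Finset.sum_congr rfl fun t _ => by ring

lemma gen_mul_self (hφ : IsStructuralSet φ) (i : Fin m) :
    ι (Qf m) (φ i) * ι (Qf m) (φ i) = -1 := by
  rw [CliffordAlgebra.ι_sq_scalar]
  have hQ : (Qf m) (φ i) = -1 := by
    simp only [QuadraticMap.weightedSumSquares_apply, smul_eq_mul, neg_mul, one_mul]
    have := hφ i i
    rw [if_pos rfl] at this
    rw [Finset.sum_neg_distrib, this]
  rw [hQ, map_neg, map_one]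

lemma gen_anticomm (hφ : IsStructuralSet φ) {i j : Fin m} (h : i ≠ j) :
    ι (Qf m) (φ i) * ι (Qf m) (φ j) = -(ι (Qf m) (φ j) * ι (Qf m) (φ i)) := by
  have hs := CliffordAlgebra.ι_mul_ι_add_swap (Q := Qf m) (φ i) (φ j)
  rw [polar_Qf] at hs
  have h0 : ∑ t, (-2 : ℝ) * (φ i t * φ j t) = 0 := by
    rw [← Finset.mul_sum, hφ i j, if_neg h, mul_zero]
  rw [h0, map_zero] at hs
  exact eq_neg_of_add_eq_zero_left hs

lemma gen_comm_Pl_not_mem (hφ : IsStructuralSet φ) :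
    ∀ (l : List (Fin m)) (i : Fin m), i ∉ l →
      ι (Qf m) (φ i) * Pl φ l = ((-1 : ℝ) ^ l.length) • (Pl φ l * ι (Qf m) (φ i))
  | [], i, _ => by simp
  | x :: l, i, h => by
    have hxi : i ≠ x := fun e => h (e ▸ (List.mem_cons_self : x ∈ x :: l))
    have hl : i ∉ l := fun e => h (List.mem_cons_of_mem x e)
    have ih := gen_comm_Pl_not_mem hφ l i hl
    rw [Pl_cons, ← mul_assoc, gen_anticomm φ hφ hxi, neg_mul, mul_assoc, ih,
      mul_smul_comm, List.length_cons, pow_succ,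
      mul_comm ((-1 : ℝ) ^ l.length) (-1 : ℝ), mul_smul, neg_one_smul, mul_assoc]

lemma gen_comm_Pl_mem (hφ : IsStructuralSet φ) :
    ∀ (l : List (Fin m)) (i : Fin m), l.Nodup → i ∈ l →
      ι (Qf m) (φ i) * Pl φ l = ((-1 : ℝ) ^ (l.length - 1)) • (Pl φ l * ι (Qf m) (φ i))
  | [], i, _, h => by simp at h
  | x :: l, i, hn, h => by
    rcases List.mem_cons.mp h with rfl | hl
    · have hl : i ∉ l := (List.nodup_cons.mp hn).1
      have ih := gen_comm_Pl_not_mem φ hφ l i hl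
      have hcard : (i :: l).length - 1 = l.length := by simp
      rw [hcard, Pl_cons, ← mul_assoc, gen_mul_self φ hφ, ih, smul_mul_assoc, smul_smul,
        ← pow_add, Even.neg_one_pow ⟨l.length, rfl⟩, one_smul, mul_assoc,
        gen_mul_self φ hφ, mul_neg_one, neg_one_mul]
    · have hx : i ≠ x := fun e => (List.nodup_cons.mp hn).1 (e ▸ hl)
      have ih := gen_comm_Pl_mem hφ l i (List.nodup_cons.mp hn).2 hl
      obtain ⟨n, hnn⟩ : ∃ n, l.length = n + 1 :=
        ⟨l.length - 1, (Nat.succ_pred_eq_of_pos (List.length_pos_iff_ne_nil.mpr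
          (List.ne_nil_of_mem hl))).symm⟩
      have hcard : (x :: l).length - 1 = l.length := by simp
      rw [hcard, Pl_cons, ← mul_assoc, gen_anticomm φ hφ hx, neg_mul, mul_assoc, ih,
        mul_smul_comm, hnn, Nat.add_sub_cancel, pow_succ,
        mul_comm ((-1 : ℝ) ^ n) (-1 : ℝ), mul_smul, neg_one_smul, mul_assoc]

lemma Pl_mul_rev (hφ : IsStructuralSet φ) :
    ∀ l : List (Fin m), Pl φ l * Pl φ l.reverse = ((-1 : ℝ) ^ l.length) • 1
  | [] => by simp
  | x :: l => by
    have ih := Pl_mul_rev hφ l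
    rw [List.reverse_cons, Pl_cons, Pl_append,
      show Pl φ [x] = ι (Qf m) (φ x) from by simp [Pl]]
    calc ι (Qf m) (φ x) * Pl φ l * (Pl φ l.reverse * ι (Qf m) (φ x))
        = ι (Qf m) (φ x) * (Pl φ l * Pl φ l.reverse) * ι (Qf m) (φ x) := by
          rw [mul_assoc, mul_assoc, mul_assoc]
      _ = ((-1 : ℝ) ^ l.length) • (ι (Qf m) (φ x) * ι (Qf m) (φ x)) := by
          rw [ih, mul_smul_comm, smul_mul_assoc, mul_one]
      _ = ((-1 : ℝ) ^ (x :: l).length) • 1 := by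
          rw [gen_mul_self φ hφ, List.length_cons, pow_succ, mul_smul, neg_one_smul]

lemma Pl_perm (hφ : IsStructuralSet φ) {l₁ l₂ : List (Fin m)} (h : l₁.Perm l₂)
    (hn : l₁.Nodup) :
    ∃ ε : ℝ, (ε = 1 ∨ ε = -1) ∧ Pl φ l₁ = ε • Pl φ l₂ := by
  induction h with
  | nil => exact ⟨1, Or.inl rfl, by simp⟩
  | cons x h ih =>
      obtain ⟨ε, hε, he⟩ := ih (List.nodup_cons.mp hn).2
      exact ⟨ε, hε, by rw [Pl_cons, Pl_cons, he, mul_smul_comm]⟩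
  | swap x y l =>
      have hxy : y ≠ x := fun e => (List.nodup_cons.mp hn).1 (e ▸ (List.mem_cons_self : x ∈ x :: l))
      refine ⟨-1, Or.inr rfl, ?_⟩
      rw [Pl_cons, Pl_cons, Pl_cons, Pl_cons, ← mul_assoc, ← mul_assoc,
        gen_anticomm φ hφ hxy]
      simp
  | trans h1 h2 ih1 ih2 =>
      obtain ⟨ε₁, hε₁, e1⟩ := ih1 hn
      obtain ⟨ε₂, hε₂, e2⟩ := ih2 (h1.nodup hn)
      refine ⟨ε₁ * ε₂, ?_, by rw [e1, e2, smul_smul]⟩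
      rcases hε₁ with rfl | rfl <;> rcases hε₂ with rfl | rfl <;> simp

lemma span_phi (hφ : IsStructuralSet φ) : Submodule.span ℝ (Set.range φ) = ⊤ := by
  rcases Nat.eq_zero_or_pos m with rfl | hm0
  · refine Submodule.eq_top_iff'.mpr fun x => ?_
    have : x = 0 := Subsingleton.elim x 0
    rw [this]; exact Submodule.zero_mem _
  · have li : LinearIndependent ℝ φ := by
      rw [Fintype.linearIndependent_iff]
      intro c hc i
      have h1 : ∀ t, ∑ i2, c i2 * φ i2 t = 0 := fun t => by
        have := congrFun hc t
        simpa using this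
      calc c i = ∑ i2, c i2 * (if i2 = i then (1 : ℝ) else 0) := by simp
        _ = ∑ i2, c i2 * ∑ t, φ i2 t * φ i t :=
            Finset.sum_congr rfl fun i2 _ => by rw [hφ i2 i]
        _ = ∑ t, (∑ i2, c i2 * φ i2 t) * φ i t := by
            simp_rw [Finset.mul_sum]
            rw [Finset.sum_comm]
            simp_rw [Finset.sum_mul, mul_assoc]
        _ = 0 := by simp [h1]
    haveI : Nonempty (Fin m) := ⟨⟨0, hm0⟩⟩
    exact li.span_eq_top_of_card_eq_finrank (by simp)

lemma omega_mul_ι (hφ : IsStructuralSet φ) (hm : Even m) (v : Fin m → ℝ) :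
    prodS φ Finset.univ * ι (Qf m) v = -(ι (Qf m) v * prodS φ Finset.univ) := by
  set ω := prodS φ (Finset.univ : Finset (Fin m)) with hω
  set T : (Fin m → ℝ) →ₗ[ℝ] Cl m :=
    (LinearMap.mulLeft ℝ ω).comp (ι (Qf m)) + (LinearMap.mulRight ℝ ω).comp (ι (Qf m))
    with hT
  have key : ∀ i, T (φ i) = 0 := by
    intro i
    have hm0 : 0 < m := i.pos
    have hmem : i ∈ Finset.univ.sort (· ≤ ·) := by
      rw [Finset.mem_sort]; exact Finset.mem_univ i
    have hlen : ((Finset.univ : Finset (Fin m)).sort (· ≤ ·)).length = m := by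
      rw [Finset.length_sort, Finset.card_univ, Fintype.card_fin]
    have hcomm := gen_comm_Pl_mem φ hφ (Finset.univ.sort (· ≤ ·)) i
      (Finset.sort_nodup _ _) hmem
    rw [hlen] at hcomm
    have hsign : ((-1 : ℝ)) ^ (m - 1) = -1 :=
      Odd.neg_one_pow (Nat.Even.sub_odd hm0 hm odd_one)
    rw [hsign] at hcomm
    have : ι (Qf m) (φ i) * ω = -(ω * ι (Qf m) (φ i)) := by
      rw [hω, prodS_eq, hcomm, neg_smul, one_smul]
    simp only [hT, LinearMap.add_apply, LinearMap.comp_apply, LinearMap.mulLeft_apply,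
      LinearMap.mulRight_apply, this]
    exact add_neg_cancel _
  have hker : Submodule.span ℝ (Set.range φ) ≤ LinearMap.ker T := by
    rw [Submodule.span_le]
    rintro _ ⟨i, rfl⟩
    exact LinearMap.mem_ker.mpr (key i)
  rw [span_phi φ hφ] at hker
  have hv : T v = 0 := LinearMap.mem_ker.mp (hker Submodule.mem_top)
  simp only [hT, LinearMap.add_apply, LinearMap.comp_apply, LinearMap.mulLeft_apply,
    LinearMap.mulRight_apply] at hv
  exact eq_neg_of_add_eq_zero_left hv

lemma omega_mul_vecprod (hφ : IsStructuralSet φ) (hm : Even m) :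
    ∀ vs : List (Fin m → ℝ),
      prodS φ Finset.univ * (vs.map (ι (Qf m))).prod =
        ((-1 : ℝ) ^ vs.length) • ((vs.map (ι (Qf m))).prod * prodS φ Finset.univ)
  | [] => by simp
  | v :: vs => by
    have ih := omega_mul_vecprod hφ hm vs
    rw [List.map_cons, List.prod_cons, ← mul_assoc, omega_mul_ι φ hφ hm v, neg_mul,
      mul_assoc, ih, mul_smul_comm, List.length_cons, pow_succ,
      mul_comm ((-1 : ℝ) ^ vs.length) (-1 : ℝ), mul_smul, neg_one_smul, mul_assoc]

lemma omega_mul_rev (hφ : IsStructuralSet φ) (hm : Even m) :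
    prodS φ Finset.univ * reverse (Q := Qf m) (prodS φ Finset.univ) = 1 := by
  rw [prodS_eq, reverse_Pl, Pl_mul_rev φ hφ]
  have hlen : ((Finset.univ : Finset (Fin m)).sort (· ≤ ·)).length = m := by
    rw [Finset.length_sort, Finset.card_univ, Fintype.card_fin]
  rw [hlen, Even.neg_one_pow hm, one_smul]

lemma eA_eq_vecprod (A : Finset (Fin m)) :
    eA A = (((A.sort (· ≤ ·)).map stdB).map (ι (Qf m))).prod := by
  rw [eA, prodS, List.map_map]
  rfl

lemma omega_conj (hφ : IsStructuralSet φ) (hm : Even m) {k : ℕ} {a : Cl m}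
    (ha : a ∈ gradeK m k) :
    prodS φ Finset.univ * a * reverse (Q := Qf m) (prodS φ Finset.univ) =
      ((-1 : ℝ) ^ k) • a := by
  induction ha using Submodule.span_induction with
  | mem x hx =>
      obtain ⟨A, hA, rfl⟩ := hx
      rw [eA_eq_vecprod, omega_mul_vecprod φ hφ hm, smul_mul_assoc, mul_assoc,
        omega_mul_rev φ hφ hm, mul_one]
      congr 2
      simp [hA]
  | zero => simp
  | add x y hx hy ihx ihy => rw [mul_add, add_mul, ihx, ihy, smul_add]
  | smul c x hx ihx => rw [mul_smul_comm, smul_mul_assoc, ihx, smul_comm]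

lemma key_compl (hφ : IsStructuralSet φ) (hm : Even m) {k : ℕ} {a : Cl m}
    (ha : a ∈ gradeK m k) (A : Finset (Fin m)) :
    prodS φ Aᶜ * a * reverse (Q := Qf m) (prodS φ Aᶜ) =
      ((-1 : ℝ) ^ k) • (prodS φ A * a * reverse (Q := Qf m) (prodS φ A)) := by
  classical
  set sA := A.sort (· ≤ ·) with hsA
  set sAc := Aᶜ.sort (· ≤ ·) with hsAc
  set L := (Finset.univ : Finset (Fin m)).sort (· ≤ ·) with hL
  -- the concatenation is a nodup permutation of L
  have hdisj : Disjoint A Aᶜ := disjoint_compl_right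
  have hnodup : (sA ++ sAc).Nodup := by
    rw [List.nodup_append]
    refine ⟨Finset.sort_nodup _ _, Finset.sort_nodup _ _, ?_⟩
    intro x hx y hy hxy
    subst hxy
    exact (Finset.disjoint_left.mp hdisj (Finset.mem_sort _ |>.mp hx))
      (Finset.mem_sort _ |>.mp hy)
  have hperm : (sA ++ sAc).Perm L := by
    rw [← Multiset.coe_eq_coe]
    have h4 : ((sA ++ sAc : List (Fin m)) : Multiset (Fin m)) = A.val + Aᶜ.val := by
      rw [← Multiset.coe_add, hsA, hsAc, Finset.sort_eq, Finset.sort_eq]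
    rw [h4, hL, Finset.sort_eq]
    have h5 := congrArg Finset.val
      ((Finset.disjUnion_eq_union A Aᶜ hdisj).trans (Finset.union_compl A))
    exact h5
  obtain ⟨ε, hε, hPl⟩ := Pl_perm φ hφ hperm hnodup
  -- P_A * P_Ac = ε • ω
  have h1 : prodS φ A * prodS φ Aᶜ = ε • prodS φ Finset.univ := by
    rw [prodS_eq, prodS_eq, prodS_eq, ← Pl_append, ← hsA, ← hsAc, ← hL, hPl]
  -- rev(P_A) * P_A = (-1)^|A| • 1
  have hrev : reverse (Q := Qf m) (prodS φ A) * prodS φ A = ((-1 : ℝ) ^ A.card) • 1 := by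
    rw [prodS_eq, reverse_Pl, ← hsA]
    have := Pl_mul_rev φ hφ sA.reverse
    rw [List.reverse_reverse, List.length_reverse] at this
    rw [this, hsA, Finset.length_sort]
  -- P_Ac = ((-1)^|A| * ε) • (rev(P_A) * ω)
  have h2 : prodS φ Aᶜ = (((-1 : ℝ) ^ A.card) * ε) •
      (reverse (Q := Qf m) (prodS φ A) * prodS φ Finset.univ) := by
    have := congrArg (fun z => reverse (Q := Qf m) (prodS φ A) * z) h1
    rw [← mul_assoc, hrev, smul_mul_assoc, one_mul, mul_smul_comm] at this
    have h3 := congrArg (fun z => ((-1 : ℝ) ^ A.card) • z) this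
    simp only [smul_smul] at h3
    rw [← pow_add, Even.neg_one_pow ⟨A.card, rfl⟩, one_smul] at h3
    exact h3
  -- rev(P_A) = σ • P_A
  obtain ⟨σ, hσ, hσe⟩ := Pl_perm φ hφ (List.reverse_perm sA) (List.nodup_reverse.mpr (Finset.sort_nodup _ _))
  have hrevPA : reverse (Q := Qf m) (prodS φ A) = σ • prodS φ A := by
    rw [prodS_eq, reverse_Pl, ← hsA, hσe]
  set c := ((-1 : ℝ) ^ A.card) * ε with hc
  have hc2 : c * c = 1 := by
    rcases hε with rfl | rfl <;>
      simp [hc, ← pow_add, Even.neg_one_pow (⟨A.card, rfl⟩ : Even (A.card + A.card))]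
  have hσ2 : σ * σ = 1 := by rcases hσ with rfl | rfl <;> norm_num
  -- now compute
  have hrevc : reverse (Q := Qf m) (prodS φ Aᶜ) =
      c • (reverse (Q := Qf m) (prodS φ Finset.univ) * prodS φ A) := by
    rw [h2, map_smul, CliffordAlgebra.reverse.map_mul, CliffordAlgebra.reverse_reverse]
  rw [hrevc, h2]
  rw [smul_mul_assoc, smul_mul_assoc, mul_smul_comm, smul_smul, hc2, one_smul]
  have hmid : prodS φ Finset.univ * a * reverse (Q := Qf m) (prodS φ Finset.univ) =
      ((-1 : ℝ) ^ k) • a := omega_conj φ hφ hm ha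
  calc reverse (Q := Qf m) (prodS φ A) * prodS φ Finset.univ * a *
        (reverse (Q := Qf m) (prodS φ Finset.univ) * prodS φ A)
      = reverse (Q := Qf m) (prodS φ A) *
          (prodS φ Finset.univ * a * reverse (Q := Qf m) (prodS φ Finset.univ)) *
          prodS φ A := by
        simp only [mul_assoc]
    _ = ((-1 : ℝ) ^ k) • (reverse (Q := Qf m) (prodS φ A) * a * prodS φ A) := by
        rw [hmid, mul_smul_comm, smul_mul_assoc, mul_assoc]
    _ = ((-1 : ℝ) ^ k) • (prodS φ A * a * reverse (Q := Qf m) (prodS φ A)) := by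
        congr 1
        rw [hrevPA, smul_mul_assoc, smul_mul_assoc, mul_smul_comm]

end Psi6Aux

/-- for a structural set `φ` with `m` even and a `k`-grade multivector
`a`, `Ψⱼ^{φ,φ}(a) = Ψ_{m-j}^{φ,φ}(a)` if `k` is even, and `= -Ψ_{m-j}^{φ,φ}(a)` if
`k` is odd. -/
theorem psiK_psiK_compl_even_dim {m j k : ℕ} (φ : Fin m → (Fin m → ℝ))
    (hφ : IsStructuralSet φ) (hm : Even m) (hj : j ≤ m) (hk : k ≤ m)
    (a : Cl m) (ha : a ∈ gradeK m k) :
    (Even k → PsiK φ φ j a = PsiK φ φ (m - j) a) ∧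
      (Odd k → PsiK φ φ j a = -PsiK φ φ (m - j) a) := by
  classical
  have main : PsiK φ φ (m - j) a = ((-1 : ℝ) ^ k) • PsiK φ φ j a := by
    rw [PsiK, PsiK, Finset.smul_sum]
    refine Finset.sum_nbij' (fun B => Bᶜ) (fun A => Aᶜ) ?_ ?_ ?_ ?_ ?_
    · intro B hB
      rw [Finset.mem_filter] at hB ⊢
      refine ⟨Finset.mem_univ _, ?_⟩
      rw [Finset.card_compl, hB.2, Fintype.card_fin]
      omega
    · intro A hA
      rw [Finset.mem_filter] at hA ⊢
      refine ⟨Finset.mem_univ _, ?_⟩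
      rw [Finset.card_compl, hA.2, Fintype.card_fin]
    · intro B _
      exact compl_compl B
    · intro A _
      exact compl_compl A
    · intro B hB
      have h := Psi6Aux.key_compl φ hφ hm ha Bᶜ
      rw [compl_compl] at h
      exact h
  refine ⟨fun hk2 => ?_, fun hk2 => ?_⟩
  · rw [main, Even.neg_one_pow hk2, one_smul]
  · rw [main, Odd.neg_one_pow hk2, neg_smul, one_smul, neg_neg]
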